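/- Let f: X × Y → ℝ be continuously differentiable, convex in x and concave in y, with X, Y compact convex subsets of ℝᵈ. Let D be a Bregman divergence induced by a continuously differentiable convex function φ. Suppose (x★, y★) solves min over x ∈ Δₓ, max over y ∈ Δ_y of f(x,y) + η⁻¹D(x,x') − η⁻¹D(y,y'), with x★, y★ interior points and η > 0. Then for all x ∈ Δₓ and y ∈ Δ_y: f(x★, y) + η⁻¹(D(x★,x') + D(y★,y')) ≤ f(x, y★) + η⁻¹(D(x,x') + D(y,y') − D(x,x★) − D(y,y★)). -/

import Mathlib

open scoped RealInnerProductSpace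
open InnerProductSpace Set

/-- Bregman divergence induced by `φ` with gradient map `φ'`. -/
noncomputable def bregmanDiv {d : ℕ}
    (φ : EuclideanSpace ℝ (Fin d) → ℝ) (φ' : EuclideanSpace ℝ (Fin d) → EuclideanSpace ℝ (Fin d))
    (u v : EuclideanSpace ℝ (Fin d)) : ℝ :=
  φ u - φ v - ⟪φ' v, u - v⟫

section helpers

variable {E : Type*} [NormedAddCommGroup E] [InnerProductSpace ℝ E] [CompleteSpace E]

/-- Gradient inequality for a convex function at a point of the set. -/
lemma convex_grad_le {s : Set E} {g : E → ℝ} (hg : ConvexOn ℝ s g)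
    {xs w : E} (hxs : xs ∈ s) (hw : HasGradientAt g w xs) :
    ∀ x ∈ s, ⟪w, x - xs⟫ ≤ g x - g xs := by
  intro x hx
  have hL : HasDerivAt (fun t : ℝ => xs + t • (x - xs)) (x - xs) 0 := by
    simpa using ((hasDerivAt_id (0:ℝ)).smul_const (x - xs)).const_add xs
  have hFD : HasFDerivAt g (toDual ℝ E w) ((fun t : ℝ => xs + t • (x - xs)) 0) := by
    simpa using (hasGradientAt_iff_hasFDerivAt.mp hw)
  have hψ : HasDerivAt (fun t : ℝ => g (xs + t • (x - xs))) ⟪w, x - xs⟫ 0 := by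
    have h := hFD.comp_hasDerivAt 0 hL
    simp at h
    exact h
  have tends : Filter.Tendsto (slope (fun t : ℝ => g (xs + t • (x - xs))) 0)
      (nhdsWithin 0 (Set.Ioi 0)) (nhds ⟪w, x - xs⟫) :=
    (hasDerivAt_iff_tendsto_slope.mp hψ).mono_left
      (nhdsWithin_mono 0 (fun t ht => ne_of_gt ht))
  refine le_of_tendsto tends ?_
  filter_upwards [Ioc_mem_nhdsGT one_pos] with t ht
  have hcomb := hg.2 hxs hx (by linarith [ht.2] : (0:ℝ) ≤ 1 - t) ht.1.le (by ring)
  have hpt : (1 - t) • xs + t • x = xs + t • (x - xs) := by module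
  rw [hpt] at hcomb
  rw [slope_def_field]
  simp only [zero_smul, add_zero, sub_zero]
  rw [div_le_iff₀ ht.1]
  simp only [smul_eq_mul] at hcomb
  nlinarith [hcomb]

end helpers

/-- Three-point identity for the Bregman divergence. -/
lemma bregman_three_point {d : ℕ}
    (φ : EuclideanSpace ℝ (Fin d) → ℝ) (φ' : EuclideanSpace ℝ (Fin d) → EuclideanSpace ℝ (Fin d))
    (x xs v : EuclideanSpace ℝ (Fin d)) :
    ⟪φ' xs - φ' v, x - xs⟫
      = bregmanDiv φ φ' x v - bregmanDiv φ φ' xs v - bregmanDiv φ φ' x xs := by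
  simp only [bregmanDiv, inner_sub_left, inner_sub_right]
  ring

/-- Gradient of the Bregman divergence in its first argument. -/
lemma bregman_hasGradientAt {d : ℕ}
    (φ : EuclideanSpace ℝ (Fin d) → ℝ) (φ' : EuclideanSpace ℝ (Fin d) → EuclideanSpace ℝ (Fin d))
    (hφ' : ∀ v, HasGradientAt φ (φ' v) v) (v u0 : EuclideanSpace ℝ (Fin d)) :
    HasGradientAt (fun u => bregmanDiv φ φ' u v) (φ' u0 - φ' v) u0 := by
  have h1 : HasFDerivAt φ (toDual ℝ _ (φ' u0)) u0 := hasGradientAt_iff_hasFDerivAt.mp (hφ' u0)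
  have h2 : HasFDerivAt (fun u : EuclideanSpace ℝ (Fin d) => ⟪φ' v, u - v⟫)
      (toDual ℝ _ (φ' v)) u0 := by
    have := ((toDual ℝ (EuclideanSpace ℝ (Fin d)) (φ' v)).hasFDerivAt
      (x := u0)).sub_const (⟪φ' v, v⟫)
    simpa [inner_sub_right] using this
  have h3 : HasFDerivAt (fun u => bregmanDiv φ φ' u v)
      (toDual ℝ _ (φ' u0) - toDual ℝ _ (φ' v)) u0 := by
    exact (h1.sub_const (φ v)).sub h2
  rw [hasGradientAt_iff_hasFDerivAt, map_sub]
  exact h3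

/-- One-sided pushback: if `xs` is an interior minimizer of `g + η⁻¹ D(·, x')` on `s`
with `g` convex and differentiable at `xs`, then a strengthened optimality inequality holds. -/
lemma pushback {d : ℕ}
    (φ : EuclideanSpace ℝ (Fin d) → ℝ) (φ' : EuclideanSpace ℝ (Fin d) → EuclideanSpace ℝ (Fin d))
    (hφ' : ∀ v, HasGradientAt φ (φ' v) v)
    {s : Set (EuclideanSpace ℝ (Fin d))} {g : EuclideanSpace ℝ (Fin d) → ℝ}
    (hg : ConvexOn ℝ s g) {xs : EuclideanSpace ℝ (Fin d)}
    (hgd : DifferentiableAt ℝ g xs) {η : ℝ} (hη : 0 < η)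
    (x' : EuclideanSpace ℝ (Fin d)) (hxs : xs ∈ interior s)
    (hmin : ∀ u ∈ s, g xs + η⁻¹ * bregmanDiv φ φ' xs x' ≤ g u + η⁻¹ * bregmanDiv φ φ' u x') :
    ∀ x ∈ s, g xs + η⁻¹ * bregmanDiv φ φ' xs x'
      ≤ g x + η⁻¹ * (bregmanDiv φ φ' x x' - bregmanDiv φ φ' x xs) := by
  intro x hx
  have hw : HasGradientAt g (gradient g xs) xs := hgd.hasGradientAt
  have hB := bregman_hasGradientAt φ φ' hφ' x' xs
  have hG : HasFDerivAt (fun u => g u + η⁻¹ * bregmanDiv φ φ' u x')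
      (toDual ℝ _ (gradient g xs) + η⁻¹ • toDual ℝ _ (φ' xs - φ' x')) xs :=
    (hasGradientAt_iff_hasFDerivAt.mp hw).add
      ((hasGradientAt_iff_hasFDerivAt.mp hB).const_mul η⁻¹)
  have hmin' : IsLocalMin (fun u => g u + η⁻¹ * bregmanDiv φ φ' u x') xs := by
    filter_upwards [mem_interior_iff_mem_nhds.mp hxs] with u hu
    exact hmin u hu
  have h0 := hmin'.hasFDerivAt_eq_zero hG
  have hw0 : gradient g xs = -(η⁻¹ • (φ' xs - φ' x')) := by
    have heq : toDual ℝ (EuclideanSpace ℝ (Fin d)) (gradient g xs + η⁻¹ • (φ' xs - φ' x'))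
        = toDual ℝ (EuclideanSpace ℝ (Fin d)) 0 := by
      rw [map_add, map_smul, map_zero]
      exact_mod_cast h0
    exact eq_neg_of_add_eq_zero_left ((toDual ℝ _).injective heq)
  have hineq := convex_grad_le hg (interior_subset hxs) hw x hx
  rw [hw0] at hineq
  rw [inner_neg_left, real_inner_smul_left, bregman_three_point φ φ' x xs x'] at hineq
  linarith

/-- Pushback property of a saddle point of the Bregman-regularized
convex-concave objective (Lemma on saddle-point mirror-descent steps). -/
theorem stmt_4 {d : ℕ}
    (f : EuclideanSpace ℝ (Fin d) → EuclideanSpace ℝ (Fin d) → ℝ)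
    (hf : ContDiff ℝ 1 (fun p : EuclideanSpace ℝ (Fin d) × EuclideanSpace ℝ (Fin d) => f p.1 p.2))
    (Δx Δy : Set (EuclideanSpace ℝ (Fin d)))
    (hΔxC : IsCompact Δx) (hΔxc : Convex ℝ Δx)
    (hΔyC : IsCompact Δy) (hΔyc : Convex ℝ Δy)
    (hfx : ∀ y ∈ Δy, ConvexOn ℝ Δx (fun x => f x y))
    (hfy : ∀ x ∈ Δx, ConcaveOn ℝ Δy (fun y => f x y))
    (φ : EuclideanSpace ℝ (Fin d) → ℝ)
    (φ' : EuclideanSpace ℝ (Fin d) → EuclideanSpace ℝ (Fin d))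
    (hφc : ConvexOn ℝ Set.univ φ)
    (hφ' : ∀ v, HasGradientAt φ (φ' v) v)
    (η : ℝ) (hη : 0 < η)
    (x' y' xs ys : EuclideanSpace ℝ (Fin d))
    (hxs : xs ∈ interior Δx) (hys : ys ∈ interior Δy)
    -- `(xs, ys)` is a saddle point of `F(x,y) = f x y + η⁻¹ D(x,x') - η⁻¹ D(y,y')` on `Δx × Δy`
    (hsaddle : ∀ x ∈ Δx, ∀ y ∈ Δy,
      f xs y + η⁻¹ * bregmanDiv φ φ' xs x' - η⁻¹ * bregmanDiv φ φ' y y'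
        ≤ f xs ys + η⁻¹ * bregmanDiv φ φ' xs x' - η⁻¹ * bregmanDiv φ φ' ys y' ∧
      f xs ys + η⁻¹ * bregmanDiv φ φ' xs x' - η⁻¹ * bregmanDiv φ φ' ys y'
        ≤ f x ys + η⁻¹ * bregmanDiv φ φ' x x' - η⁻¹ * bregmanDiv φ φ' ys y') :
    ∀ x ∈ Δx, ∀ y ∈ Δy,
      f xs y + η⁻¹ * (bregmanDiv φ φ' xs x' + bregmanDiv φ φ' ys y')
        ≤ f x ys + η⁻¹ * (bregmanDiv φ φ' x x' + bregmanDiv φ φ' y y'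
            - bregmanDiv φ φ' x xs - bregmanDiv φ φ' y ys) := by
  intro x hx y hy
  have hxsΔ : xs ∈ Δx := interior_subset hxs
  have hysΔ : ys ∈ Δy := interior_subset hys
  have hdf : Differentiable ℝ (fun p : EuclideanSpace ℝ (Fin d) × EuclideanSpace ℝ (Fin d) => f p.1 p.2) :=
    hf.differentiable one_ne_zero
  have hfd1 : DifferentiableAt ℝ (fun u => f u ys) xs :=
    by
      have h := (hdf (xs, ys)).comp xs
        (DifferentiableAt.prodMk (𝕜 := ℝ) (x := xs) (f₁ := fun u => u) differentiableAt_id (differentiableAt_const ys))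
      exact h
  have hfd2 : DifferentiableAt ℝ (fun v => -f xs v) ys :=
    ((hdf (xs, ys)).comp ys ((differentiableAt_const xs).prodMk differentiableAt_id)).neg
  have hX := pushback φ φ' hφ' (hfx ys hysΔ) hfd1 hη x' hxs
    (fun u hu => by have := (hsaddle u hu ys hysΔ).2; linarith) x hx
  have hY := pushback φ φ' hφ' ((hfy xs hxsΔ).neg) hfd2 hη y' hys
    (fun v hv => by
      have := (hsaddle xs hxsΔ v hv).1
      simp only [Pi.neg_apply]
      linarith) y hy
  simp only [Pi.neg_apply] at hY
  nlinarith [hY, hX]
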